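/- The asset-transfer safety invariant holds under promises: if every correct process applies promised transfer transactions in an order consistent with causal order, and a transfer(a,b,x) is only issued when the issuer's locally computed balance of a (initial balance plus promised incoming transfers minus all previously issued outgoing transfers) is ≥ x, and source order holds for promises, then at every correct process, at every time, the computed balance of every account is nonnegative. -/

import Mathlib

/-- An asset transfer: `x` units move from account `src` to account `dst`,
with per-account sequence number `sn`. -/
structure Transfer (Account : Type) where
  src : Account
  dst : Account
  amt : ℝ
  sn : ℕ

/-- Balance of account `a` after applying the list `l` of transfers:
initial balance plus applied incoming minus applied outgoing. -/
def bal {Account : Type} [DecidableEq Account]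
    (init : Account → ℝ) (l : List (Transfer Account)) (a : Account) : ℝ :=
  init a + ((l.filter (fun u => u.dst = a)).map Transfer.amt).sum
         - ((l.filter (fun u => u.src = a)).map Transfer.amt).sum

/-- Asset-transfer safety under promises: if promised transfers are applied in
an order consistent with causal order, transfers are only issued when the
issuer's locally computed balance covers the amount, and source order holds,
then at every correct process and at every time the computed balance of every
account is nonnegative. -/
theorem balances_nonnegative
    (Proc Account : Type) [DecidableEq Account]
    [DecidableEq (Transfer Account)]
    (init : Account → ℝ) (hinit : ∀ a, 0 ≤ init a)
    (L : Proc → List (Transfer Account))   -- applied transfers, in order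
    (deps : Transfer Account → List (Transfer Account))
    -- amounts are positive
    (hpos : ∀ (p : Proc), ∀ u ∈ L p, 0 < u.amt)
    -- no transfer is applied twice
    (hnodup : ∀ p : Proc, (L p).Nodup)
    (hdepsnodup : ∀ u : Transfer Account, (deps u).Nodup)
    -- source order: at most one transfer per (account, seqno)
    (hseq : ∀ (p : Proc), ∀ u ∈ L p, ∀ v ∈ L p,
      u.src = v.src → u.sn = v.sn → u = v)
    -- issuance guard: the issuer's locally computed balance of the source
    -- account (initial + promised incoming deps − declared outgoing deps,
    -- the latter being all previously issued outgoing transfers) covers amt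
    (hguard : ∀ (p : Proc), ∀ u ∈ L p,
      u.amt ≤ init u.src
        + (((deps u).filter (fun v => v.dst = u.src)).map Transfer.amt).sum
        - (((deps u).filter (fun v => v.src = u.src)).map Transfer.amt).sum)
    -- dependencies have positive amounts and do not include u itself
    (hdeppos : ∀ (u : Transfer Account), ∀ v ∈ deps u, 0 < v.amt ∧ v ≠ u)
    -- causal order: when u is applied at position k, all its declared
    -- dependencies were applied before it
    (hcausal : ∀ (p : Proc) (k : ℕ) (u : Transfer Account),
      (L p)[k]? = some u → ∀ v ∈ deps u, v ∈ (L p).take k)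
    -- completeness for outgoing: any earlier-applied outgoing transfer of
    -- u's source account is among u's declared dependencies
    (houtcomplete : ∀ (p : Proc) (k : ℕ) (u : Transfer Account),
      (L p)[k]? = some u → ∀ v ∈ (L p).take k,
        v.src = u.src → v ∈ deps u) :
    ∀ (p : Proc) (k : ℕ) (a : Account),
      0 ≤ bal init ((L p).take k) a := by

  intro p k
  induction k with
  | zero => intro a; simp [bal, hinit a]
  | succ k ih =>
    intro a
    rw [List.take_succ]
    cases h : (L p)[k]? with
    | none => simpa using ih a
    | some u =>
      have hget : (L p)[k]? = some u := by
        simpa using h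
      have huL : u ∈ L p := by
        exact List.mem_of_getElem? hget
      have hsub : List.Sublist ((L p).take k) (L p) := List.take_sublist _ _
      have htknd : ((L p).take k).Nodup := (hnodup p).sublist hsub
      -- balance after appending u
      have hbal : ∀ b, bal init ((L p).take k ++ [u]) b
          = bal init ((L p).take k) b
            + (if u.dst = b then u.amt else 0)
            - (if u.src = b then u.amt else 0) := by
        intro b
        simp only [bal, List.filter_append, List.map_append, List.sum_append]
        by_cases h1 : u.dst = b <;> by_cases h2 : u.src = b <;>
          simp [h1, h2] <;> ring
      simp only [h, Option.toList_some]
      rw [hbal a]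
      by_cases ha : u.src = a
      · subst ha
        -- need bal take k u.src ≥ u.amt
        have key : u.amt ≤ bal init ((L p).take k) u.src := by
          have hg := hguard p u huL
          -- incoming: deps-sum ≤ take-sum
          have hdepsin : ((deps u).filter (fun v => v.dst = u.src)).Nodup :=
            (hdepsnodup u).filter _
          have htkin : (((L p).take k).filter (fun v => v.dst = u.src)).Nodup :=
            htknd.filter _
          have hin : (((deps u).filter (fun v => v.dst = u.src)).map Transfer.amt).sum
              ≤ ((((L p).take k).filter (fun v => v.dst = u.src)).map Transfer.amt).sum := by
            rw [← List.sum_toFinset _ hdepsin, ← List.sum_toFinset _ htkin]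
            apply Finset.sum_le_sum_of_subset_of_nonneg
            · intro v hv
              simp only [List.mem_toFinset, List.mem_filter] at hv ⊢
              exact ⟨hcausal p k u hget v hv.1, hv.2⟩
            · intro v hv _
              simp only [List.mem_toFinset, List.mem_filter] at hv
              exact le_of_lt (hpos p v (hsub.subset hv.1))
          -- outgoing: equal sums
          have hout : ((((L p).take k).filter (fun v => v.src = u.src)).map Transfer.amt).sum
              = (((deps u).filter (fun v => v.src = u.src)).map Transfer.amt).sum := by
            have hdepsout : ((deps u).filter (fun v => v.src = u.src)).Nodup :=
              (hdepsnodup u).filter _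
            have htkout : (((L p).take k).filter (fun v => v.src = u.src)).Nodup :=
              htknd.filter _
            rw [← List.sum_toFinset _ hdepsout, ← List.sum_toFinset _ htkout]
            congr 1
            ext v
            simp only [List.mem_toFinset, List.mem_filter]
            constructor
            · rintro ⟨hv1, hv2⟩
              refine ⟨houtcomplete p k u hget v hv1 ?_, hv2⟩
              exact of_decide_eq_true hv2
            · rintro ⟨hv1, hv2⟩
              exact ⟨hcausal p k u hget v hv1, hv2⟩
          unfold bal
          rw [hout]
          calc u.amt ≤ init u.src
                + (((deps u).filter (fun v => v.dst = u.src)).map Transfer.amt).sum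
                - (((deps u).filter (fun v => v.src = u.src)).map Transfer.amt).sum := hg
            _ ≤ _ := by linarith
        have hamt : 0 < u.amt := hpos p u huL
        by_cases h1 : u.dst = u.src <;> simp [h1] <;> linarith
      · have h0 : 0 ≤ bal init ((L p).take k) a := ih a
        have hamt : 0 < u.amt := hpos p u huL
        by_cases h1 : u.dst = a <;> simp [ha, h1] <;> linarith
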